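/- Let M ∈ ℝ, c ∈ ℝ with c ≠ 0, and let H be the map H(x,y) = (x̄, ȳ) with x̄ = M + c·x − y², ȳ = (y + x̄² − M)/c. Then H has a fixed point (u,v) with u ≠ v at which the Jacobian matrix of H has eigenvalue −1 if and only if c < 0 and 4M = (1 − 3c)(3 − c). (This is the curve PD(asym): M = (1−3c)(3−c)/4 of period doubling of the symmetric couple of fixed points, which exists only for c < 0.) -/
import Mathlib


/-- The map `H(x,y) = (x̄, ȳ)` with `x̄ = M + c·x − y²` and `ȳ = (y + x̄² − M)/c`,
the explicit form of the implicit system `x̄ = M + c·x − y²`, `c·ȳ = −M + y + x̄²`. -/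
noncomputable def Hmap (M c : ℝ) (p : ℝ × ℝ) : ℝ × ℝ :=
  (M + c * p.1 - p.2 ^ 2,
    (p.2 + (M + c * p.1 - p.2 ^ 2) ^ 2 - M) / c)

/-- The Jacobian matrix (2×2 real derivative matrix) of `Hmap M c` at the point
`(x,y)`, where `x̄ = M + c·x − y²`:
`[[c, −2y], [2x̄, (1 − 4x̄y)/c]]`. -/
noncomputable def HJac (M c : ℝ) (p : ℝ × ℝ) : Matrix (Fin 2) (Fin 2) ℝ :=
  !![c, -2 * p.2;
     2 * (M + c * p.1 - p.2 ^ 2), (1 - 4 * (M + c * p.1 - p.2 ^ 2) * p.2) / c]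

/-- `μ ∈ ℂ` is an eigenvalue of the real 2×2 matrix `A`
(eigenvalues of real matrices are taken over `ℂ`). -/
def hasEigenvalue (A : Matrix (Fin 2) (Fin 2) ℝ) (μ : ℂ) : Prop :=
  (A.map (fun t : ℝ => (t : ℂ)) - μ • 1).det = 0

lemma eig_iff (M c u v : ℝ) :
    hasEigenvalue (HJac M c (u, v)) (-1) ↔
      (c + 1) * ((1 - 4 * (M + c * u - v ^ 2) * v) / c + 1)
        + 4 * v * (M + c * u - v ^ 2) = 0 := by
  rw [hasEigenvalue, HJac, Matrix.det_fin_two]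
  simp [Matrix.map_apply, Matrix.smul_apply, Matrix.one_apply]
  constructor
  · intro h
    have : ((( (c + 1) * ((1 - 4 * (M + c * u - v ^ 2) * v) / c + 1)
        + 4 * v * (M + c * u - v ^ 2)) : ℝ) : ℂ) = 0 := by push_cast; linear_combination h
    exact_mod_cast this
  · intro h
    have : ((( (c + 1) * ((1 - 4 * (M + c * u - v ^ 2) * v) / c + 1)
        + 4 * v * (M + c * u - v ^ 2)) : ℝ) : ℂ) = 0 := by exact_mod_cast h
    push_cast at this; linear_combination this

/-- `H` has an off-diagonal fixed point at which the Jacobian matrix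
has eigenvalue `−1` iff `c < 0` and `4M = (1−3c)(3−c)` (the curve `PD(asym)` of period
doubling of the symmetric couple of fixed points, existing only for `c < 0`). -/
theorem stmt_15 (M c : ℝ) (hc : c ≠ 0) :
    (∃ u v : ℝ, u ≠ v ∧ Hmap M c (u, v) = (u, v) ∧
        hasEigenvalue (HJac M c (u, v)) (-1)) ↔
      (c < 0 ∧ 4 * M = (1 - 3 * c) * (3 - c)) := by
  constructor
  · rintro ⟨u, v, huv, hfix, heig⟩
    rw [Hmap, Prod.mk.injEq] at hfix
    obtain ⟨h1, h2⟩ := hfix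
    simp only at h1 h2
    rw [div_eq_iff hc] at h2
    rw [h1] at h2
    rw [eig_iff] at heig
    -- clear denominators in heig
    have heig' : (c + 1) * (1 - 4 * (M + c * u - v ^ 2) * v + c)
        + 4 * v * (M + c * u - v ^ 2) * c = 0 := by
      field_simp at heig; linear_combination heig
    -- from h1 : M + c*u - v^2 = u, rewrite
    have h1' : v ^ 2 = M + (c - 1) * u := by linarith [h1]
    have h2' : u ^ 2 = M + (c - 1) * v := by nlinarith [h2]
    rw [h1] at heig'
    have heq : (c + 1) ^ 2 = 4 * (u * v) := by nlinarith [heig']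
    have hsum : u + v = 1 - c := by
      have hne : u - v ≠ 0 := sub_ne_zero.mpr huv
      have : (u - v) * (u + v - (1 - c)) = 0 := by nlinarith [h1', h2']
      rcases mul_eq_zero.mp this with h | h
      · exact absurd h hne
      · linarith
    have hne : u - v ≠ 0 := sub_ne_zero.mpr huv
    have hsq : 0 < (u - v) ^ 2 := by positivity
    constructor
    · nlinarith [hsq, hsum, heq]
    · nlinarith [h1', h2', hsum, heq]
  · rintro ⟨hcneg, hM⟩
    set s := Real.sqrt (-c) with hs
    have hs2 : s ^ 2 = -c := Real.sq_sqrt (by linarith)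
    have hspos : 0 < s := Real.sqrt_pos.mpr (by linarith)
    refine ⟨(1 - c) / 2 + s, (1 - c) / 2 - s, by intro h; nlinarith, ?_, ?_⟩
    · rw [Hmap, Prod.mk.injEq]
      constructor
      · nlinarith [hs2, hM]
      · rw [div_eq_iff hc]
        have hx : M + c * ((1 - c) / 2 + s) - ((1 - c) / 2 - s) ^ 2
            = (1 - c) / 2 + s := by nlinarith [hs2, hM]
        rw [hx]; nlinarith [hs2, hM]
    · rw [eig_iff]
      have hx : M + c * ((1 - c) / 2 + s) - ((1 - c) / 2 - s) ^ 2
          = (1 - c) / 2 + s := by nlinarith [hs2, hM]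
      rw [hx]
      field_simp
      nlinarith [hs2, hM]
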